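/- arXiv:2510.22796 — 3 statements merged into one kernel-verified Lean document; each statement's English description precedes it below -/
import Mathlib

section
/- Let p ≥ 1 be an integer and let u, d be formal power series in two variables x, y over ℝ such that the coefficient of x^0 y^j in u is 0 for every 0 ≤ j ≤ p, the coefficient of x^0 y^j in d is 0 for every 0 ≤ j ≤ p, and the coefficient of x^1 y^0 in d is 1. Then there exists a unique polynomial η in x, y over ℝ of total degree strictly less than p such that every coefficient of the power series u − d·η of total degree at most p vanishes. -/
/-- The exponent `(i, j)` of the monomial `x^i y^j`, as a finitely supported
function on `Fin 2`. -/
noncomputable def expPair (i j : ℕ) : Fin 2 →₀ ℕ := Finsupp.equivFunOnFinite.symm ![i, j]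

lemma expPair0 (i j : ℕ) : expPair i j 0 = i := rfl
lemma expPair1 (i j : ℕ) : expPair i j 1 = j := rfl

lemma expPair_eq_self (m : Fin 2 →₀ ℕ) : expPair (m 0) (m 1) = m := by
  ext k
  fin_cases k
  · exact expPair0 _ _
  · exact expPair1 _ _

lemma expPair_inj {a b a' b' : ℕ} (h : expPair a b = expPair a' b') : a = a' ∧ b = b' :=
  ⟨by rw [← expPair0 a b, h, expPair0], by rw [← expPair1 a b, h, expPair1]⟩

lemma sum_expPair (i j : ℕ) : ∑ k ∈ (expPair i j).support, expPair i j k = i + j := by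
  have : ((expPair i j).sum fun _ e => e) = i + j := by
    rw [Finsupp.sum_fintype]
    · simp [Fin.sum_univ_two, expPair0, expPair1]
    · intro; rfl
  exact this

lemma expPair_add (a b a' b' : ℕ) : expPair a b + expPair a' b' = expPair (a + a') (b + b') := by
  ext k
  fin_cases k
  · simp [expPair0]
  · simp [expPair1]

lemma coeff_mul_expPair (f g : MvPowerSeries (Fin 2) ℝ) (i j : ℕ) :
    MvPowerSeries.coeff (expPair i j) (f * g) =
      ∑ a ∈ Finset.range (i + 1), ∑ b ∈ Finset.range (j + 1),
        MvPowerSeries.coeff (expPair (i - a) (j - b)) f *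
          MvPowerSeries.coeff (expPair a b) g := by
  rw [MvPowerSeries.coeff_mul, ← Finset.sum_product']
  refine Finset.sum_nbij' (i := fun x => (x.2 0, x.2 1))
    (j := fun y => (expPair (i - y.1) (j - y.2), expPair y.1 y.2)) ?_ ?_ ?_ ?_ ?_
  · rintro ⟨s, t⟩ hst
    rw [Finset.HasAntidiagonal.mem_antidiagonal] at hst
    have h0 : s 0 + t 0 = i := by rw [← Finsupp.add_apply, hst]; rfl
    have h1 : s 1 + t 1 = j := by rw [← Finsupp.add_apply, hst]; rfl
    simp only [Finset.mem_product, Finset.mem_range]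
    omega
  · rintro ⟨a, b⟩ hab
    simp only [Finset.mem_product, Finset.mem_range] at hab
    rw [Finset.HasAntidiagonal.mem_antidiagonal, expPair_add]
    congr 1 <;> omega
  · rintro ⟨s, t⟩ hst
    rw [Finset.HasAntidiagonal.mem_antidiagonal] at hst
    have h0 : s 0 + t 0 = i := by rw [← Finsupp.add_apply, hst]; rfl
    have h1 : s 1 + t 1 = j := by rw [← Finsupp.add_apply, hst]; rfl
    have hs : expPair (i - t 0) (j - t 1) = s := by
      rw [show i - t 0 = s 0 by omega, show j - t 1 = s 1 by omega, expPair_eq_self]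
    have ht : expPair (t 0) (t 1) = t := expPair_eq_self t
    simp [hs, ht]
  · rintro ⟨a, b⟩ hab
    simp [expPair0, expPair1]
  · rintro ⟨s, t⟩ hst
    rw [Finset.HasAntidiagonal.mem_antidiagonal] at hst
    have h0 : s 0 + t 0 = i := by rw [← Finsupp.add_apply, hst]; rfl
    have h1 : s 1 + t 1 = j := by rw [← Finsupp.add_apply, hst]; rfl
    have hs : expPair (i - t 0) (j - t 1) = s := by
      rw [show i - t 0 = s 0 by omega, show j - t 1 = s 1 by omega, expPair_eq_self]
    have ht : expPair (t 0) (t 1) = t := expPair_eq_self t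
    simp [hs, ht]

noncomputable def cfun (u d : MvPowerSeries (Fin 2) ℝ) : ℕ → ℕ → ℝ
  | a, b =>
    MvPowerSeries.coeff (expPair (a + 1) b) u -
      ∑ x ∈ ((Finset.range (a + 1) ×ˢ Finset.range (b + 1)).erase (a, b)).attach,
        MvPowerSeries.coeff (expPair (a + 1 - (x : ℕ × ℕ).1) (b - (x : ℕ × ℕ).2)) d *
          cfun u d (x : ℕ × ℕ).1 (x : ℕ × ℕ).2
termination_by a b => (a, b)
decreasing_by
  have hx := x.2
  simp only [Finset.mem_erase, Finset.mem_product, Finset.mem_range] at hx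
  obtain ⟨hne, h1, h2⟩ := hx
  rcases Nat.lt_succ_iff_lt_or_eq.mp h1 with h | h
  · exact Prod.Lex.left _ _ h
  · rw [h]
    exact Prod.Lex.right _ (by rcases Nat.lt_succ_iff_lt_or_eq.mp h2 with h' | h'
                               · exact h'
                               · exact absurd (Prod.ext h h') hne)

lemma cfun_sum (u d : MvPowerSeries (Fin 2) ℝ)
    (hd1 : MvPowerSeries.coeff (expPair 1 0) d = 1) (a b : ℕ) :
    ∑ x ∈ Finset.range (a + 1) ×ˢ Finset.range (b + 1),
        MvPowerSeries.coeff (expPair (a + 1 - x.1) (b - x.2)) d * cfun u d x.1 x.2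
      = MvPowerSeries.coeff (expPair (a + 1) b) u := by
  have hmem : (a, b) ∈ Finset.range (a + 1) ×ˢ Finset.range (b + 1) := by
    simp [Finset.mem_product]
  rw [← Finset.sum_erase_add _ _ hmem]
  have hdiag : MvPowerSeries.coeff (expPair (a + 1 - a) (b - b)) d * cfun u d a b
      = cfun u d a b := by
    rw [show a + 1 - a = 1 by omega, Nat.sub_self, hd1, one_mul]
  rw [hdiag]
  conv_lhs => rw [cfun]
  rw [Finset.sum_attach _ (fun y : ℕ × ℕ =>
    MvPowerSeries.coeff (expPair (a + 1 - y.1) (b - y.2)) d * cfun u d y.1 y.2)]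
  ring

/-- Let `p ≥ 1` and let `u, d` be formal power series in two variables `x, y` over `ℝ`
such that the coefficient of `x^0 y^j` in `u` is `0` for every `0 ≤ j ≤ p`, the coefficient
of `x^0 y^j` in `d` is `0` for every `0 ≤ j ≤ p`, and the coefficient of `x^1 y^0` in `d`
is `1`.  Then there exists a unique polynomial `η` in `x, y` over `ℝ` of total degree
strictly less than `p` such that every coefficient of the power series `u − d·η` of total
degree at most `p` vanishes. -/
theorem exists_unique_eta (p : ℕ) (hp : 1 ≤ p)
    (u d : MvPowerSeries (Fin 2) ℝ)
    (hu : ∀ j : ℕ, j ≤ p → MvPowerSeries.coeff (expPair 0 j) u = 0)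
    (hd : ∀ j : ℕ, j ≤ p → MvPowerSeries.coeff (expPair 0 j) d = 0)
    (hd1 : MvPowerSeries.coeff (expPair 1 0) d = 1) :
    ∃! η : MvPolynomial (Fin 2) ℝ, η.totalDegree < p ∧
      ∀ i j : ℕ, i + j ≤ p →
        MvPowerSeries.coeff (expPair i j)
          (u - d * (η : MvPowerSeries (Fin 2) ℝ)) = 0 := by
  classical
  set c := cfun u d with hc
  set T : Finset (ℕ × ℕ) :=
    (Finset.range p ×ˢ Finset.range p).filter (fun x => x.1 + x.2 < p) with hT
  set η : MvPolynomial (Fin 2) ℝ :=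
    ∑ x ∈ T, MvPolynomial.monomial (expPair x.1 x.2) (c x.1 x.2) with hη
  have hcoeffη : ∀ a b : ℕ,
      MvPolynomial.coeff (expPair a b) η = if a + b < p then c a b else 0 := by
    intro a b
    rw [hη, MvPolynomial.coeff_sum]
    have hcong : ∀ x ∈ T,
        MvPolynomial.coeff (expPair a b)
            (MvPolynomial.monomial (expPair x.1 x.2) (c x.1 x.2))
          = if x = (a, b) then c a b else 0 := by
      intro x hx
      by_cases h : x = (a, b)
      · subst h; simp [MvPolynomial.coeff_monomial]
      · rw [MvPolynomial.coeff_monomial, if_neg, if_neg h]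
        intro he
        obtain ⟨h1, h2⟩ := expPair_inj he
        exact h (Prod.ext h1 h2)
    rw [Finset.sum_congr rfl hcong, Finset.sum_ite_eq' T (a, b) (fun _ => c a b)]
    by_cases hab : a + b < p
    · rw [if_pos hab, if_pos]
      simp only [hT, Finset.mem_filter, Finset.mem_product, Finset.mem_range]
      omega
    · rw [if_neg hab, if_neg]
      simp only [hT, Finset.mem_filter, Finset.mem_product, Finset.mem_range]
      omega
  have hdeg : η.totalDegree < p := by
    have h1 : η.totalDegree ≤ p - 1 := by
      refine (MvPolynomial.totalDegree_finset_sum _ _).trans (Finset.sup_le ?_)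
      intro x hx
      simp only [hT, Finset.mem_filter, Finset.mem_product, Finset.mem_range] at hx
      by_cases hc0 : c x.1 x.2 = 0
      · simp [hc0]
      · rw [MvPolynomial.totalDegree_monomial _ hc0]
        have : ((expPair x.1 x.2).sum fun _ e => e) = x.1 + x.2 := sum_expPair x.1 x.2
        rw [this]
        omega
    omega
  have hmul : ∀ i j : ℕ, i + j ≤ p →
      MvPowerSeries.coeff (expPair i j) (d * (η : MvPowerSeries (Fin 2) ℝ))
        = MvPowerSeries.coeff (expPair i j) u := by
    intro i j hij
    rw [coeff_mul_expPair]
    cases i with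
    | zero =>
      rw [Finset.sum_range_one, hu j (by omega)]
      refine Finset.sum_eq_zero fun b hb => ?_
      rw [Nat.sub_zero, hd (j - b) (by omega), zero_mul]
    | succ i =>
      rw [Finset.sum_range_succ]
      have hz : (∑ b ∈ Finset.range (j + 1),
          MvPowerSeries.coeff (expPair (i + 1 - (i + 1)) (j - b)) d *
            MvPowerSeries.coeff (expPair (i + 1) b) (η : MvPowerSeries (Fin 2) ℝ)) = 0 := by
        refine Finset.sum_eq_zero fun b hb => ?_
        rw [Nat.sub_self, hd (j - b) (by omega), zero_mul]
      rw [hz, add_zero, ← cfun_sum u d hd1 i j, Finset.sum_product]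
      refine Finset.sum_congr rfl fun a ha => Finset.sum_congr rfl fun b hb => ?_
      simp only [Finset.mem_range] at ha hb
      rw [MvPolynomial.coeff_coe, hcoeffη, if_pos (by omega), hc]
  refine ⟨η, ⟨hdeg, fun i j hij => by rw [map_sub, hmul i j hij, sub_self]⟩, ?_⟩
  rintro η' ⟨hdeg', hcond'⟩
  set δ : MvPolynomial (Fin 2) ℝ := η' - η with hδdef
  have hδc : (δ : MvPowerSeries (Fin 2) ℝ)
      = (η' : MvPowerSeries (Fin 2) ℝ) - (η : MvPowerSeries (Fin 2) ℝ) := by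
    rw [hδdef, ← MvPolynomial.coeToMvPowerSeries.ringHom_apply,
      ← MvPolynomial.coeToMvPowerSeries.ringHom_apply,
      ← MvPolynomial.coeToMvPowerSeries.ringHom_apply, map_sub]
  have hδ : ∀ i j : ℕ, i + j ≤ p →
      MvPowerSeries.coeff (expPair i j) (d * (δ : MvPowerSeries (Fin 2) ℝ)) = 0 := by
    intro i j hij
    have h1 := hcond' i j hij
    rw [map_sub, sub_eq_zero] at h1
    rw [hδc, mul_sub, map_sub, ← h1, hmul i j hij, sub_self]
  have key : ∀ a b : ℕ, MvPolynomial.coeff (expPair a b) δ = 0 := by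
    intro a
    induction a using Nat.strong_induction_on with
    | _ a iha =>
      intro b
      induction b using Nat.strong_induction_on with
      | _ b ihb =>
        by_cases hab : a + b < p
        · have h0 := hδ (a + 1) b (by omega)
          rw [coeff_mul_expPair] at h0
          rw [Finset.sum_range_succ] at h0
          have hz1 : (∑ b' ∈ Finset.range (b + 1),
              MvPowerSeries.coeff (expPair (a + 1 - (a + 1)) (b - b')) d *
                MvPowerSeries.coeff (expPair (a + 1) b') (δ : MvPowerSeries (Fin 2) ℝ)) = 0 := by
            refine Finset.sum_eq_zero fun b' hb' => ?_
            rw [Nat.sub_self, hd (b - b') (by omega), zero_mul]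
          rw [hz1, add_zero, Finset.sum_range_succ] at h0
          have hz2 : (∑ a' ∈ Finset.range a, ∑ b' ∈ Finset.range (b + 1),
              MvPowerSeries.coeff (expPair (a + 1 - a') (b - b')) d *
                MvPowerSeries.coeff (expPair a' b') (δ : MvPowerSeries (Fin 2) ℝ)) = 0 := by
            refine Finset.sum_eq_zero fun a' ha' => Finset.sum_eq_zero fun b' hb' => ?_
            rw [Finset.mem_range] at ha'
            rw [MvPolynomial.coeff_coe, iha a' ha' b', mul_zero]
          rw [hz2, zero_add, Finset.sum_range_succ] at h0
          have hz3 : (∑ b' ∈ Finset.range b,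
              MvPowerSeries.coeff (expPair (a + 1 - a) (b - b')) d *
                MvPowerSeries.coeff (expPair a b') (δ : MvPowerSeries (Fin 2) ℝ)) = 0 := by
            refine Finset.sum_eq_zero fun b' hb' => ?_
            rw [Finset.mem_range] at hb'
            rw [MvPolynomial.coeff_coe, ihb b' hb', mul_zero]
          rw [hz3, zero_add, show a + 1 - a = 1 by omega, Nat.sub_self, hd1, one_mul,
            MvPolynomial.coeff_coe] at h0
          exact h0
        · rw [hδdef, MvPolynomial.coeff_sub, sub_eq_zero]
          have hsum : (∑ k ∈ (expPair a b).support, expPair a b k) = a + b :=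
            sum_expPair a b
          rw [MvPolynomial.coeff_eq_zero_of_totalDegree_lt (by rw [hsum]; omega),
            MvPolynomial.coeff_eq_zero_of_totalDegree_lt (by rw [hsum]; omega)]
  have hδ0 : δ = 0 := by
    apply MvPolynomial.ext
    intro m
    rw [MvPolynomial.coeff_zero, ← expPair_eq_self m]
    exact key _ _
  have := sub_eq_zero.mp (hδdef ▸ hδ0)
  exact this
end

section
/- Let p ≥ 1 be an integer and let u, d : ℕ × ℕ → ℝ be families of real coefficients such that u(0,j) = 0 for all 0 ≤ j ≤ p, d(0,j) = 0 for all 0 ≤ j ≤ p, and d(1,0) = 1. Then there exists a family c : ℕ × ℕ → ℝ with c(m,n) = 0 whenever m + n ≥ p, such that for every pair (i,j) with 1 ≤ i and i + j ≤ p one has u(i,j) = Σ_{m=0}^{i} Σ_{n=0}^{j} d(i−m, j−n) · c(m,n). -/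
noncomputable def Cfun (u d : ℕ × ℕ → ℝ) : ℕ → ℕ → ℝ
  | m, n =>
    u (m + 1, n)
      - ∑ m' ∈ (Finset.range m).attach,
          ∑ n' ∈ Finset.range (n + 1), d (m + 1 - m'.1, n - n') * Cfun u d m'.1 n'
      - ∑ n' ∈ (Finset.range n).attach, d (1, n - n'.1) * Cfun u d m n'.1
termination_by m n => (m, n)
decreasing_by
  · exact Prod.Lex.left _ _ (Finset.mem_range.mp m'.2)
  · exact Prod.Lex.right _ (Finset.mem_range.mp n'.2)

lemma Cfun_eq (u d : ℕ × ℕ → ℝ) (m n : ℕ) :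
    Cfun u d m n =
      u (m + 1, n)
        - ∑ m' ∈ Finset.range m,
            ∑ n' ∈ Finset.range (n + 1), d (m + 1 - m', n - n') * Cfun u d m' n'
        - ∑ n' ∈ Finset.range n, d (1, n - n') * Cfun u d m n' := by
  rw [Cfun]
  rw [← Finset.sum_attach (Finset.range m)
      (fun m' => ∑ n' ∈ Finset.range (n + 1), d (m + 1 - m', n - n') * Cfun u d m' n'),
    ← Finset.sum_attach (Finset.range n) (fun n' => d (1, n - n') * Cfun u d m n')]

/-- Let `p ≥ 1` and let `u, d : ℕ × ℕ → ℝ` be families of real coefficients such that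
`u(0,j) = 0` for all `0 ≤ j ≤ p`, `d(0,j) = 0` for all `0 ≤ j ≤ p`, and `d(1,0) = 1`.
Then there exists a family `c : ℕ × ℕ → ℝ` with `c(m,n) = 0` whenever `m + n ≥ p`,
such that for every pair `(i,j)` with `1 ≤ i` and `i + j ≤ p` one has
`u(i,j) = Σ_{m=0}^{i} Σ_{n=0}^{j} d(i−m, j−n) · c(m,n)`. -/
theorem exists_coeff_family (p : ℕ) (hp : 1 ≤ p) (u d : ℕ × ℕ → ℝ)
    (hu : ∀ j : ℕ, j ≤ p → u (0, j) = 0)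
    (hd : ∀ j : ℕ, j ≤ p → d (0, j) = 0)
    (hd1 : d (1, 0) = 1) :
    ∃ c : ℕ × ℕ → ℝ,
      (∀ m n : ℕ, p ≤ m + n → c (m, n) = 0) ∧
      (∀ i j : ℕ, 1 ≤ i → i + j ≤ p →
        u (i, j) = ∑ m ∈ Finset.range (i + 1), ∑ n ∈ Finset.range (j + 1),
          d (i - m, j - n) * c (m, n)) := by
  refine ⟨fun q => if q.1 + q.2 < p then Cfun u d q.1 q.2 else 0, ?_, ?_⟩
  · intro m n h
    simp only [ite_eq_right_iff]
    omega
  · intro i j hi hij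
    obtain ⟨k, rfl⟩ : ∃ k, i = k + 1 := ⟨i - 1, by omega⟩
    rw [Finset.sum_range_succ, Finset.sum_range_succ]
    have hlast : ∑ n ∈ Finset.range (j + 1),
        d (k + 1 - (k + 1), j - n) * (if (k+1 : ℕ) + n < p then Cfun u d (k+1) n else 0) = 0 := by
      refine Finset.sum_eq_zero fun n hn => ?_
      have : k + 1 - (k + 1) = 0 := by omega
      rw [this, hd (j - n) (by omega)]
      ring
    rw [hlast, add_zero]
    -- middle term: m = k
    have hmid : ∑ n ∈ Finset.range (j + 1),
        d (k + 1 - k, j - n) * (if (k : ℕ) + n < p then Cfun u d k n else 0)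
        = (∑ n ∈ Finset.range j, d (1, j - n) * Cfun u d k n) + Cfun u d k j := by
      rw [Finset.sum_range_succ]
      have h1 : k + 1 - k = 1 := by omega
      have h2 : j - j = 0 := by omega
      rw [h1, h2, hd1, if_pos (by omega), one_mul]
      congr 1
      refine Finset.sum_congr rfl fun n hn => ?_
      have hn' := Finset.mem_range.mp hn
      rw [if_pos (by omega)]
    rw [hmid]
    have hfirst : ∑ m ∈ Finset.range k, ∑ n ∈ Finset.range (j + 1),
        d (k + 1 - m, j - n) * (if (m : ℕ) + n < p then Cfun u d m n else 0)
        = ∑ m ∈ Finset.range k, ∑ n ∈ Finset.range (j + 1),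
          d (k + 1 - m, j - n) * Cfun u d m n := by
      refine Finset.sum_congr rfl fun m hm => Finset.sum_congr rfl fun n hn => ?_
      have hm' := Finset.mem_range.mp hm
      have hn' := Finset.mem_range.mp hn
      rw [if_pos (by omega)]
    rw [hfirst, Cfun_eq u d k j]
    ring
end

section
/- Let p ≥ 1 be an integer and let u, d : ℕ × ℕ → ℝ be families of real coefficients such that d(0,j) = 0 for all 0 ≤ j ≤ p and d(1,0) = 1. If c₁, c₂ : ℕ × ℕ → ℝ both vanish on all pairs (m,n) with m + n ≥ p and both satisfy, for every pair (i,j) with 1 ≤ i and i + j ≤ p, the equation u(i,j) = Σ_{m=0}^{i} Σ_{n=0}^{j} d(i−m, j−n) · c(m,n), then c₁ = c₂. -/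
/-- Let `p ≥ 1` and let `u, d : ℕ × ℕ → ℝ` be families of real coefficients such that
`d(0,j) = 0` for all `0 ≤ j ≤ p` and `d(1,0) = 1`.  If `c₁, c₂ : ℕ × ℕ → ℝ` both vanish
on all pairs `(m,n)` with `m + n ≥ p` and both satisfy, for every pair `(i,j)` with
`1 ≤ i` and `i + j ≤ p`, the equation
`u(i,j) = Σ_{m=0}^{i} Σ_{n=0}^{j} d(i−m, j−n) · c(m,n)`, then `c₁ = c₂`. -/
theorem coeff_family_unique (p : ℕ) (hp : 1 ≤ p) (u d : ℕ × ℕ → ℝ)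
    (hd : ∀ j : ℕ, j ≤ p → d (0, j) = 0)
    (hd1 : d (1, 0) = 1)
    (c₁ c₂ : ℕ × ℕ → ℝ)
    (hc₁0 : ∀ m n : ℕ, p ≤ m + n → c₁ (m, n) = 0)
    (hc₂0 : ∀ m n : ℕ, p ≤ m + n → c₂ (m, n) = 0)
    (hc₁ : ∀ i j : ℕ, 1 ≤ i → i + j ≤ p →
      u (i, j) = ∑ m ∈ Finset.range (i + 1), ∑ n ∈ Finset.range (j + 1),
        d (i - m, j - n) * c₁ (m, n))
    (hc₂ : ∀ i j : ℕ, 1 ≤ i → i + j ≤ p →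
      u (i, j) = ∑ m ∈ Finset.range (i + 1), ∑ n ∈ Finset.range (j + 1),
        d (i - m, j - n) * c₂ (m, n)) :
    c₁ = c₂ := by
  have e0 : ∀ m n : ℕ, c₁ (m, n) = c₂ (m, n) := by
    intro m
    induction m using Nat.strong_induction_on with
    | _ m ihm =>
      intro n
      induction n using Nat.strong_induction_on with
      | _ n ihn =>
        by_cases h : p ≤ m + n
        · rw [hc₁0 _ _ h, hc₂0 _ _ h]
        · push_neg at h
          have h2 : (m + 1) + n ≤ p := by omega
          have E := (hc₁ (m + 1) n (Nat.le_add_left 1 m) h2).symm.trans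
            (hc₂ (m + 1) n (Nat.le_add_left 1 m) h2)
          have hsub : ∑ m' ∈ Finset.range (m + 2), ∑ n' ∈ Finset.range (n + 1),
              d (m + 1 - m', n - n') * (c₁ (m', n') - c₂ (m', n')) = 0 := by
            simp only [mul_sub, Finset.sum_sub_distrib]
            rw [E]; ring
          have hmain : ∑ m' ∈ Finset.range (m + 2), ∑ n' ∈ Finset.range (n + 1),
              d (m + 1 - m', n - n') * (c₁ (m', n') - c₂ (m', n'))
              = c₁ (m, n) - c₂ (m, n) := by
            rw [Finset.sum_eq_single m]
            · rw [Finset.sum_eq_single n]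
              · have : m + 1 - m = 1 := by omega
                rw [this, Nat.sub_self, hd1, one_mul]
              · intro n' hn' hne
                have hlt : n' < n := by
                  have := Finset.mem_range.mp hn'; omega
                rw [ihn n' hlt, sub_self, mul_zero]
              · intro hmem
                exact absurd (Finset.self_mem_range_succ n) hmem
            · intro m' hm' hne
              have hm'le : m' < m + 2 := Finset.mem_range.mp hm'
              rcases Nat.lt_or_ge m' m with hlt | hge
              · apply Finset.sum_eq_zero
                intro n' _
                rw [ihm m' hlt n', sub_self, mul_zero]
              · have : m' = m + 1 := by omega
                subst this
                apply Finset.sum_eq_zero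
                intro n' _
                have : m + 1 - (m + 1) = 0 := by omega
                rw [this, hd (n - n') (by omega), zero_mul]
            · intro hmem
              exact absurd (Finset.mem_range.mpr (by omega)) hmem
          have := hmain.symm.trans hsub
          linarith
  funext x
  obtain ⟨m, n⟩ := x
  exact e0 m n
end
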